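/- Let V be a locally cartesian closed category with a terminal object and all small colimits (in particular every pullback functor between slice categories of V has a right adjoint). Let S and T be endofunctors of V and φ : S ⟶ T a cartesian natural transformation, i.e. every naturality square of φ is a pullback. If T preserves all small colimits, then S preserves all small colimits. -/

import Mathlib

open CategoryTheory Limits

universe v u

/-- let `V` be a locally cartesian closed category (every pullback functor
between slices has a right adjoint, i.e. is a left adjoint) with a terminal object and
all small colimits, and let `φ : S ⟶ T` be a cartesian natural transformation between
endofunctors of `V` (every naturality square is a pullback). If `T` preserves all small
colimits then so does `S`. -/
theorem cartesian_over_cocontinuous_is_cocontinuous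
    {V : Type u} [Category.{v} V] [HasTerminal V] [HasColimits V] [HasPullbacks V]
    (lcc : ∀ {X Y : V} (f : X ⟶ Y), (Over.pullback f).IsLeftAdjoint)
    (S T : V ⥤ V) (φ : S ⟶ T)
    (hφ : ∀ {X Y : V} (g : X ⟶ Y),
      IsPullback (S.map g) (φ.app X) (φ.app Y) (T.map g))
    [PreservesColimits T] :
    PreservesColimits S := by
  -- the functor `X ↦ (T X → T ⊤)` into the slice over `T ⊤`
  let G : V ⥤ Over (T.obj (⊤_ V)) :=
    { obj := fun X => Over.mk (T.map (terminal.from X))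
      map := fun {X Y} g => Over.homMk (T.map g)
        (by dsimp; rw [← T.map_comp, terminal.comp_from])
      map_id := fun X => by ext; simp
      map_comp := fun f g => by ext; simp }
  -- `S` is isomorphic to pulling back along `φ_⊤` and forgetting
  have key : S ≅ G ⋙ Over.pullback (φ.app (⊤_ V)) ⋙ Over.forget _ := by
    refine NatIso.ofComponents
      (fun X => (hφ (terminal.from X)).flip.isoPullback) (fun {X Y} g => ?_)
    dsimp [G, Over.pullback]
    apply pullback.hom_ext
    · rw [Category.assoc, (hφ (terminal.from Y)).flip.isoPullback_hom_fst,
        Category.assoc]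
      erw [pullback.lift_fst]
      rw [(hφ (terminal.from X)).flip.isoPullback_hom_fst_assoc]
      exact φ.naturality g
    · rw [Category.assoc, (hφ (terminal.from Y)).flip.isoPullback_hom_snd,
        Category.assoc]
      erw [pullback.lift_snd]
      rw [(hφ (terminal.from X)).flip.isoPullback_hom_snd,
        ← S.map_comp, terminal.comp_from]
  -- each factor preserves colimits
  haveI : PreservesColimits G := by
    have : PreservesColimits (G ⋙ Over.forget (T.obj (⊤_ V))) :=
      inferInstanceAs (PreservesColimits T)
    exact preservesColimits_of_reflects_of_preserves G (Over.forget _)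
  haveI := lcc (φ.app (⊤_ V))
  haveI : PreservesColimits (Over.pullback (φ.app (⊤_ V))) :=
    (Adjunction.ofIsLeftAdjoint (Over.pullback (φ.app (⊤_ V)))).leftAdjoint_preservesColimits
  exact preservesColimits_of_natIso key.symm
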